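/- For n even, the standard entangler E₀ is a unitary matrix and satisfies E₀ E₀ᵀ = S; in particular E₀ is an entangler. -/

import Mathlib

open Matrix Complex

noncomputable section

/-- Number of ones in the binary expansion of `j`. -/
def popCnt (j : ℕ) : ℕ := (Nat.digits 2 j).sum

/-- The `N × N` matrix `S = (-iσ^y) ⊗ ⋯ ⊗ (-iσ^y)` (`n` factors), `N = 2^n`;
equivalently `S |j⟩ = (-1)^{#j} |N-1-j⟩`. -/
def Smat (n : ℕ) : Matrix (Fin (2 ^ n)) (Fin (2 ^ n)) ℂ :=
  fun k j => if (k : ℕ) + (j : ℕ) = 2 ^ n - 1 then (-1 : ℂ) ^ popCnt (j : ℕ) else 0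

/-- The standard entangler `E₀` (for `n` even):
`E₀ = (1/√2) Σ_{j<N/2} ( |j⟩⟨2j| + i|j⟩⟨2j+1| + (-1)^{#j}(|N-j-1⟩⟨2j| - i|N-j-1⟩⟨2j+1|) )`. -/
def E0 (n : ℕ) : Matrix (Fin (2 ^ n)) (Fin (2 ^ n)) ℂ :=
  fun r c =>
    (Real.sqrt 2 : ℂ)⁻¹ *
      (if (r : ℕ) < 2 ^ n / 2 then
        (if (c : ℕ) = 2 * (r : ℕ) then 1
         else if (c : ℕ) = 2 * (r : ℕ) + 1 then Complex.I else 0)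
      else
        (if (c : ℕ) = 2 * (2 ^ n - 1 - (r : ℕ)) then
            (-1 : ℂ) ^ popCnt (2 ^ n - 1 - (r : ℕ))
         else if (c : ℕ) = 2 * (2 ^ n - 1 - (r : ℕ)) + 1 then
            -Complex.I * (-1 : ℂ) ^ popCnt (2 ^ n - 1 - (r : ℕ))
         else 0))

/-- `Σ = Σ_{j<N/2} ( |j⟩⟨N/2+j| - |N/2+j⟩⟨j| )`. -/
def SigmaMat (n : ℕ) : Matrix (Fin (2 ^ n)) (Fin (2 ^ n)) ℂ :=
  fun r c =>
    if (c : ℕ) = (r : ℕ) + 2 ^ n / 2 then 1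
    else if (r : ℕ) = (c : ℕ) + 2 ^ n / 2 then -1 else 0

/-- The standard finagler `F₀` (for `n` odd):
`F₀ = (1/√2) Σ_{j<N/2} ( |j⟩⟨j| + |N-j-1⟩⟨j| + (-1)^{#j}(|j⟩⟨N/2+j| - |N-j-1⟩⟨N/2+j|) )`. -/
def F0 (n : ℕ) : Matrix (Fin (2 ^ n)) (Fin (2 ^ n)) ℂ :=
  fun r c =>
    (Real.sqrt 2 : ℂ)⁻¹ *
      (if (r : ℕ) < 2 ^ n / 2 then
        (if (c : ℕ) = (r : ℕ) then 1
         else if (c : ℕ) = (r : ℕ) + 2 ^ n / 2 then (-1 : ℂ) ^ popCnt (r : ℕ) else 0)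
      else
        (if (c : ℕ) = 2 ^ n - 1 - (r : ℕ) then 1
         else if (c : ℕ) = (2 ^ n - 1 - (r : ℕ)) + 2 ^ n / 2 then
            -(-1 : ℂ) ^ popCnt (2 ^ n - 1 - (r : ℕ))
         else 0))

/-- The concurrence capacity `κ(v) = sup { |(vψ)ᵀ S (vψ)| : ‖ψ‖ = 1, ψᵀSψ = 0 }`. -/
def kappa (n : ℕ) (v : Matrix (Fin (2 ^ n)) (Fin (2 ^ n)) ℂ) : ℝ :=
  sSup { r : ℝ | ∃ ψ : Fin (2 ^ n) → ℂ,
    star ψ ⬝ᵥ ψ = 1 ∧ ψ ⬝ᵥ ((Smat n) *ᵥ ψ) = 0 ∧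
    r = ‖(v *ᵥ ψ) ⬝ᵥ ((Smat n) *ᵥ (v *ᵥ ψ))‖ }


lemma popCnt_two_mul (m : ℕ) : popCnt (2 * m) = popCnt m := by
  rcases Nat.eq_zero_or_pos m with h | h
  · simp [popCnt, h]
  · unfold popCnt
    rw [Nat.digits_def' (by norm_num : (1:ℕ) < 2) (by omega)]
    have h1 : 2 * m % 2 = 0 := by omega
    have h2 : 2 * m / 2 = m := by omega
    rw [h1, h2]; simp

lemma popCnt_two_mul_add_one (m : ℕ) : popCnt (2 * m + 1) = popCnt m + 1 := by
  unfold popCnt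
  rw [Nat.digits_def' (by norm_num : (1:ℕ) < 2) (by omega)]
  have h1 : (2 * m + 1) % 2 = 1 := by omega
  have h2 : (2 * m + 1) / 2 = m := by omega
  rw [h1, h2]; simp [add_comm]

lemma popCnt_compl : ∀ n j, j < 2 ^ n → popCnt j + popCnt (2 ^ n - 1 - j) = n := by
  intro n
  induction n with
  | zero => intro j hj; interval_cases j; simp [popCnt]
  | succ k ih =>
    intro j hj
    have hpow : 2 ^ (k + 1) = 2 * 2 ^ k := by ring
    rcases Nat.even_or_odd j with ⟨q, hq⟩ | ⟨q, hq⟩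
    · have hq2 : j = 2 * q := by omega
      subst hq2
      have hqlt : q < 2 ^ k := by omega
      have h1 : 2 ^ (k + 1) - 1 - 2 * q = 2 * (2 ^ k - 1 - q) + 1 := by omega
      rw [h1, popCnt_two_mul, popCnt_two_mul_add_one]
      have := ih q hqlt; omega
    · have hq2 : j = 2 * q + 1 := by omega
      subst hq2
      have hqlt : q < 2 ^ k := by omega
      have h1 : 2 ^ (k + 1) - 1 - (2 * q + 1) = 2 * (2 ^ k - 1 - q) := by omega
      rw [h1, popCnt_two_mul, popCnt_two_mul_add_one]
      have := ih q hqlt; omega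

def jv (n r : ℕ) : ℕ := if r < 2 ^ n / 2 then r else 2 ^ n - 1 - r
def uu (n r : ℕ) : ℂ := if r < 2 ^ n / 2 then 1 else (-1) ^ popCnt (2 ^ n - 1 - r)
def vv (n r : ℕ) : ℂ :=
  if r < 2 ^ n / 2 then Complex.I else -Complex.I * (-1) ^ popCnt (2 ^ n - 1 - r)

lemma E0_eq (n : ℕ) (r c : Fin (2 ^ n)) :
    E0 n r c = (Real.sqrt 2 : ℂ)⁻¹ *
      (if (c : ℕ) = 2 * jv n (r : ℕ) then uu n (r : ℕ)
       else if (c : ℕ) = 2 * jv n (r : ℕ) + 1 then vv n (r : ℕ) else 0) := by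
  by_cases h : (r : ℕ) < 2 ^ n / 2 <;> simp [E0, jv, uu, vv, h]

lemma two_pow_div (n : ℕ) (hn : 1 ≤ n) : 2 * (2 ^ n / 2) = 2 ^ n := by
  have : 2 ^ n = 2 * 2 ^ (n - 1) := by
    rw [← pow_succ']
    congr 1
    omega
  omega

lemma jv_lt (n : ℕ) (hn : 1 ≤ n) (r : Fin (2 ^ n)) : jv n (r : ℕ) < 2 ^ n / 2 := by
  have h2 := two_pow_div n hn
  have hr := r.isLt
  have h1 : 1 ≤ 2 ^ n / 2 := by
    have : 1 ≤ 2 ^ n := Nat.one_le_two_pow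
    omega
  unfold jv; split <;> omega

lemma sum_eq_pair {α M : Type*} [Fintype α] [DecidableEq α] [AddCommMonoid M]
    (a b : α) (hab : a ≠ b) (f : α → M) (h : ∀ x, x ≠ a → x ≠ b → f x = 0) :
    ∑ x, f x = f a + f b := by
  classical
  rw [← Finset.sum_subset (Finset.subset_univ ({a, b} : Finset α))
      (fun x _ hx => h x (fun h1 => hx (by simp [h1])) (fun h2 => hx (by simp [h2]))),
    Finset.sum_pair hab]

lemma hs2 : (Real.sqrt 2 : ℂ)⁻¹ * (Real.sqrt 2 : ℂ)⁻¹ = 2⁻¹ := by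
  rw [← mul_inv]
  congr 1
  rw [← Complex.ofReal_mul, Real.mul_self_sqrt (by norm_num)]
  norm_num

lemma prod_entry (n : ℕ) (hn : 1 ≤ n) (r c : Fin (2 ^ n)) (p q : ℂ) :
    (∑ x : Fin (2 ^ n), E0 n r x *
      ((Real.sqrt 2 : ℂ)⁻¹ *
        (if (x : ℕ) = 2 * jv n (c : ℕ) then p
         else if (x : ℕ) = 2 * jv n (c : ℕ) + 1 then q else 0))) =
    if jv n (c : ℕ) = jv n (r : ℕ) then
      2⁻¹ * (uu n (r : ℕ) * p + vv n (r : ℕ) * q) else 0 := by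
  have hjr := jv_lt n hn r
  have h2 := two_pow_div n hn
  have ha : 2 * jv n (r : ℕ) < 2 ^ n := by omega
  have hb : 2 * jv n (r : ℕ) + 1 < 2 ^ n := by omega
  set a : Fin (2 ^ n) := ⟨2 * jv n (r : ℕ), ha⟩ with ha'
  set b : Fin (2 ^ n) := ⟨2 * jv n (r : ℕ) + 1, hb⟩ with hb'
  rw [sum_eq_pair a b (by simp [ha', hb', Fin.ext_iff]) _ ?_]
  · have hEa : E0 n r a = (Real.sqrt 2 : ℂ)⁻¹ * uu n (r : ℕ) := by
      rw [E0_eq]; simp [ha']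
    have hEb : E0 n r b = (Real.sqrt 2 : ℂ)⁻¹ * vv n (r : ℕ) := by
      rw [E0_eq]; simp [hb']
    rw [hEa, hEb]
    by_cases h : jv n (c : ℕ) = jv n (r : ℕ)
    · rw [if_pos h]
      have c1 : (a : ℕ) = 2 * jv n (c : ℕ) := by simp [ha', h]
      have c2 : ¬ (b : ℕ) = 2 * jv n (c : ℕ) := by simp [hb', h]
      have c3 : (b : ℕ) = 2 * jv n (c : ℕ) + 1 := by simp [hb', h]
      rw [if_pos c1, if_neg c2, if_pos c3]
      linear_combination (uu n (r : ℕ) * p + vv n (r : ℕ) * q) * hs2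
    · rw [if_neg h]
      have c1 : ¬ (a : ℕ) = 2 * jv n (c : ℕ) := by simp [ha']; omega
      have c2 : ¬ (a : ℕ) = 2 * jv n (c : ℕ) + 1 := by simp [ha']; omega
      have c3 : ¬ (b : ℕ) = 2 * jv n (c : ℕ) := by simp [hb']; omega
      have c4 : ¬ (b : ℕ) = 2 * jv n (c : ℕ) + 1 := by simp [hb']; omega
      rw [if_neg c1, if_neg c2, if_neg c3, if_neg c4]
      ring
  · intro x hx1 hx2
    have h1 : ¬ (x : ℕ) = 2 * jv n (r : ℕ) := fun h => hx1 (Fin.ext h)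
    have h2' : ¬ (x : ℕ) = 2 * jv n (r : ℕ) + 1 := fun h => hx2 (Fin.ext h)
    rw [E0_eq, if_neg h1, if_neg h2']
    ring

lemma star_uu (n r : ℕ) : star (uu n r) = uu n r := by
  unfold uu; split_ifs <;> simp [Complex.star_def, map_pow]

lemma star_vv (n r : ℕ) : star (vv n r) = -vv n r := by
  unfold vv; split_ifs <;> simp [Complex.star_def, map_pow] <;> ring

lemma starE0 (n : ℕ) (c x : Fin (2 ^ n)) :
    star (E0 n c x) = (Real.sqrt 2 : ℂ)⁻¹ *
      (if (x : ℕ) = 2 * jv n (c : ℕ) then uu n (c : ℕ)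
       else if (x : ℕ) = 2 * jv n (c : ℕ) + 1 then -vv n (c : ℕ) else 0) := by
  rw [E0_eq, star_mul']
  congr 1
  · simp [Complex.star_def, map_inv₀, Complex.conj_ofReal]
  · rw [apply_ite (star : ℂ → ℂ), apply_ite (star : ℂ → ℂ), star_zero, star_uu, star_vv]

lemma mulT_entry (n : ℕ) (hn : 1 ≤ n) (r c : Fin (2 ^ n)) :
    (E0 n * (E0 n)ᵀ) r c =
      if jv n (c : ℕ) = jv n (r : ℕ) then
        2⁻¹ * (uu n (r : ℕ) * uu n (c : ℕ) + vv n (r : ℕ) * vv n (c : ℕ)) else 0 := by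
  rw [Matrix.mul_apply]
  rw [Finset.sum_congr rfl (fun x _ => by rw [Matrix.transpose_apply, E0_eq n c x])]
  exact prod_entry n hn r c _ _

lemma mulH_entry (n : ℕ) (hn : 1 ≤ n) (r c : Fin (2 ^ n)) :
    (E0 n * star (E0 n)) r c =
      if jv n (c : ℕ) = jv n (r : ℕ) then
        2⁻¹ * (uu n (r : ℕ) * uu n (c : ℕ) - vv n (r : ℕ) * vv n (c : ℕ)) else 0 := by
  rw [Matrix.mul_apply]
  rw [Finset.sum_congr rfl (fun x _ => by rw [Matrix.star_apply, starE0 n c x])]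
  rw [prod_entry n hn r c _ _]
  split <;> ring

lemma wsq (k : ℕ) : ((-1 : ℂ)) ^ k * (-1) ^ k = 1 := by
  rw [← pow_add]; exact Even.neg_one_pow ⟨k, rfl⟩

lemma pow_popCnt_eq (n : ℕ) (hev : Even n) (c : ℕ) (hc : c < 2 ^ n) :
    ((-1 : ℂ)) ^ popCnt (2 ^ n - 1 - c) = (-1) ^ popCnt c := by
  have h := popCnt_compl n c hc
  have h1 : ((-1 : ℂ)) ^ popCnt c * (-1) ^ popCnt (2 ^ n - 1 - c) = 1 := by
    rw [← pow_add, h]; exact Even.neg_one_pow hev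
  calc ((-1 : ℂ)) ^ popCnt (2 ^ n - 1 - c)
      = ((-1) ^ popCnt c * (-1) ^ popCnt c) * (-1) ^ popCnt (2 ^ n - 1 - c) := by
        rw [wsq, one_mul]
    _ = (-1) ^ popCnt c * ((-1) ^ popCnt c * (-1) ^ popCnt (2 ^ n - 1 - c)) := by ring
    _ = (-1) ^ popCnt c := by rw [h1, mul_one]

/-- **The standard entangler is an entangler:** for `n` even, `E₀` is unitary and
`E₀ E₀ᵀ = S`. -/
theorem E0_is_entangler (n : ℕ) (hn : 1 ≤ n) (hev : Even n) :
    E0 n ∈ Matrix.unitaryGroup (Fin (2 ^ n)) ℂ ∧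
    E0 n * (E0 n)ᵀ = Smat n := by
  have h2 := two_pow_div n hn
  constructor
  · rw [Matrix.mem_unitaryGroup_iff]
    ext r c
    have hr : (r : ℕ) < 2 ^ n := r.isLt
    have hc : (c : ℕ) < 2 ^ n := c.isLt
    rw [mulH_entry n hn r c, Matrix.one_apply]
    by_cases hj : jv n (c : ℕ) = jv n (r : ℕ)
    · rw [if_pos hj]
      by_cases h1 : (r : ℕ) < 2 ^ n / 2 <;> by_cases hh2 : (c : ℕ) < 2 ^ n / 2 <;>
        simp only [jv, h1, hh2, if_true, if_false] at hj
      · have hrc : r = c := Fin.ext (by omega)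
        rw [if_pos hrc]
        simp only [uu, vv, if_pos h1, if_pos hh2]
        rw [Complex.I_mul_I]; norm_num
      · have hne : ¬ r = c := by intro h; rw [Fin.ext_iff] at h; omega
        rw [if_neg hne]
        simp only [uu, vv, if_pos h1, if_neg hh2]
        linear_combination (2 : ℂ)⁻¹ * ((-1 : ℂ) ^ popCnt (2 ^ n - 1 - (c : ℕ))) *
          Complex.I_mul_I
      · have hne : ¬ r = c := by intro h; rw [Fin.ext_iff] at h; omega
        rw [if_neg hne]
        simp only [uu, vv, if_neg h1, if_pos hh2]
        linear_combination (2 : ℂ)⁻¹ * ((-1 : ℂ) ^ popCnt (2 ^ n - 1 - (r : ℕ))) *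
          Complex.I_mul_I
      · have hrc : r = c := Fin.ext (by omega)
        rw [if_pos hrc]
        simp only [uu, vv, if_neg h1, if_neg hh2]
        rw [show (c : ℕ) = (r : ℕ) from by omega]
        linear_combination wsq (popCnt (2 ^ n - 1 - (r : ℕ))) -
          (2 : ℂ)⁻¹ * ((-1 : ℂ) ^ popCnt (2 ^ n - 1 - (r : ℕ))) *
            ((-1 : ℂ) ^ popCnt (2 ^ n - 1 - (r : ℕ))) * Complex.I_mul_I
    · rw [if_neg hj, if_neg (fun h => hj (by rw [h]))]
  · ext r c
    have hr : (r : ℕ) < 2 ^ n := r.isLt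
    have hc : (c : ℕ) < 2 ^ n := c.isLt
    rw [mulT_entry n hn r c]
    by_cases hj : jv n (c : ℕ) = jv n (r : ℕ)
    · rw [if_pos hj]
      by_cases h1 : (r : ℕ) < 2 ^ n / 2 <;> by_cases hh2 : (c : ℕ) < 2 ^ n / 2 <;>
        simp only [jv, h1, hh2, if_true, if_false] at hj
      · simp only [Smat, if_neg (show ¬ ((r : ℕ) + (c : ℕ) = 2 ^ n - 1) from by omega)]
        simp only [uu, vv, if_pos h1, if_pos hh2]
        linear_combination (2 : ℂ)⁻¹ * Complex.I_mul_I
      · simp only [Smat, if_pos (show (r : ℕ) + (c : ℕ) = 2 ^ n - 1 from by omega)]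
        simp only [uu, vv, if_pos h1, if_neg hh2]
        rw [pow_popCnt_eq n hev (c : ℕ) hc]
        linear_combination -(2 : ℂ)⁻¹ * ((-1 : ℂ) ^ popCnt (c : ℕ)) * Complex.I_mul_I
      · simp only [Smat, if_pos (show (r : ℕ) + (c : ℕ) = 2 ^ n - 1 from by omega)]
        simp only [uu, vv, if_neg h1, if_pos hh2]
        rw [show 2 ^ n - 1 - (r : ℕ) = (c : ℕ) from by omega]
        linear_combination -(2 : ℂ)⁻¹ * ((-1 : ℂ) ^ popCnt (c : ℕ)) * Complex.I_mul_I
      · simp only [Smat, if_neg (show ¬ ((r : ℕ) + (c : ℕ) = 2 ^ n - 1) from by omega)]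
        simp only [uu, vv, if_neg h1, if_neg hh2]
        rw [show (c : ℕ) = (r : ℕ) from by omega]
        linear_combination (2 : ℂ)⁻¹ * ((-1 : ℂ) ^ popCnt (2 ^ n - 1 - (r : ℕ))) *
          ((-1 : ℂ) ^ popCnt (2 ^ n - 1 - (r : ℕ))) * Complex.I_mul_I
    · rw [if_neg hj]
      have hne : ¬ ((r : ℕ) + (c : ℕ) = 2 ^ n - 1) := by
        intro h; apply hj; unfold jv; split_ifs <;> omega
      simp only [Smat, if_neg hne]
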